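/- Every non-disturbing empirical model with nonnegative real values on a measurement cover (finite X, finite O, 𝒰) admits a signed global realization: there exists q : (X → O) → ℝ with Σ_{g : X→O} q(g) = 1 such that d_U(s) = Σ_{g : g|_U = s} q(g) for all U ∈ 𝒰 and all s : U → O. -/

import Mathlib

/-! Measurement covers, `R`-empirical models, non-disturbance, and hidden-variable
realizations. -/

section Model
variable {X O : Type} [Fintype X] [DecidableEq X] [Fintype O] [DecidableEq O]

/-- Events over a subset `V ⊆ X`: outcome assignments `V → O`. -/
def Evt (V : Finset X) : Type _ := {x // x ∈ V} → O

instance (V : Finset X) : Fintype (Evt (O := O) V) := by unfold Evt; infer_instance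
instance (V : Finset X) : DecidableEq (Evt (O := O) V) := by unfold Evt; infer_instance

/-- Restriction of events along an inclusion of subsets. -/
def restrictE {V W : Finset X} (h : W ⊆ V) (s : Evt (O := O) V) : Evt (O := O) W :=
  fun x => s ⟨x.1, h x.2⟩

/-- Restriction of a global assignment to a subset. -/
def globRestrict (g : X → O) (V : Finset X) : Evt (O := O) V := fun x => g x.1

end Model


set_option linter.unusedSectionVars false

section Aux
variable {X O : Type} [Fintype X] [DecidableEq X] [Fintype O] [DecidableEq O]

/-- cast events along an equality of finsets -/
def castE {V W : Finset X} (e : V = W) (s : Evt (O := O) V) : Evt (O := O) W :=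
  fun x => s ⟨x.1, e ▸ x.2⟩

@[simp] lemma castE_rfl {V : Finset X} (s : Evt (O := O) V) : castE rfl s = s := rfl

lemma restrictE_restrictE {T V W : Finset X} (h1 : V ⊆ T) (h2 : W ⊆ V)
    (s : Evt (O := O) T) :
    restrictE h2 (restrictE h1 s) = restrictE (h2.trans h1) s := rfl

/-- composition lemma for filtered sums -/
lemma sum_filter_comp {A B C : Type} [Fintype A] [Fintype B] [DecidableEq B]
    [DecidableEq C] (r : A → B) (p : B → C) (f : A → ℝ) (t : C) :
    ∑ a ∈ Finset.univ.filter (fun a => p (r a) = t), f a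
      = ∑ b ∈ Finset.univ.filter (fun b => p b = t),
          ∑ a ∈ Finset.univ.filter (fun a => r a = b), f a := by
  calc ∑ a ∈ Finset.univ.filter (fun a => p (r a) = t), f a
      = ∑ a : A, if p (r a) = t then f a else 0 := by
        rw [Finset.sum_filter]
    _ = ∑ b : B, ∑ a ∈ Finset.univ.filter (fun a => r a = b),
          (if p (r a) = t then f a else 0) := by
        rw [Finset.sum_fiberwise (Finset.univ : Finset A) r
          (fun a => if p (r a) = t then f a else 0)]
    _ = ∑ b : B, (if p b = t then ∑ a ∈ Finset.univ.filter (fun a => r a = b), f a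
          else 0) := by
        refine Finset.sum_congr rfl fun b _ => ?_
        by_cases hb : p b = t
        · rw [if_pos hb]
          refine Finset.sum_congr rfl fun a ha => ?_
          have : r a = b := (Finset.mem_filter.mp ha).2
          rw [this, if_pos hb]
        · rw [if_neg hb]
          refine Finset.sum_eq_zero fun a ha => ?_
          have : r a = b := (Finset.mem_filter.mp ha).2
          rw [this, if_neg hb]
    _ = _ := by rw [Finset.sum_filter]

/-- glue of two events -/
def glueE {A B : Finset X} (a : Evt (O := O) A) (b : Evt (O := O) B) :
    Evt (O := O) (A ∪ B) :=
  fun x => if h : x.1 ∈ A then a ⟨x.1, h⟩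
    else b ⟨x.1, ((Finset.mem_union.mp x.2).resolve_left h)⟩

lemma glueE_restrict_left {A B : Finset X} (a : Evt (O := O) A) (b : Evt (O := O) B) :
    restrictE Finset.subset_union_left (glueE a b) = a := by
  funext x
  show glueE a b ⟨x.1, _⟩ = a x
  simp only [glueE, dif_pos x.2]

lemma glueE_restrict_right {A B : Finset X} (a : Evt (O := O) A) (b : Evt (O := O) B)
    (hcomp : restrictE (Finset.inter_subset_left (s₂ := B)) a
      = restrictE Finset.inter_subset_right b) :
    restrictE Finset.subset_union_right (glueE a b) = b := by
  funext x
  show glueE a b ⟨x.1, _⟩ = b x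
  simp only [glueE]
  by_cases h : x.1 ∈ A
  · rw [dif_pos h]
    have := congrFun hcomp ⟨x.1, Finset.mem_inter.mpr ⟨h, x.2⟩⟩
    exact this
  · rw [dif_neg h]

lemma card_Evt (V : Finset X) :
    Fintype.card (Evt (O := O) V) = (Fintype.card O) ^ V.card := by
  have : Fintype.card (Evt (O := O) V) = Fintype.card ({x // x ∈ V} → O) := by
    convert rfl
  rw [this, Fintype.card_fun, Fintype.card_coe]

/-- Number of global assignments restricting to a given event. -/
lemma card_fiber (V : Finset X) (t : Evt (O := O) V) :
    (Finset.univ.filter (fun g : X → O => globRestrict g V = t)).card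
      = (Fintype.card O) ^ ((Finset.univ \ V).card) := by
  classical
  have hcard : (Fintype.card O) ^ ((Finset.univ \ V).card)
      = (Finset.univ : Finset (Evt (O := O) (Finset.univ \ V))).card := by
    rw [Finset.card_univ, card_Evt]
  rw [hcard]
  refine Finset.card_nbij'
    (fun g => (fun x => g x.1 : Evt (O := O) (Finset.univ \ V)))
    (fun h => (fun x => if hx : x ∈ V then t ⟨x, hx⟩
      else h ⟨x, Finset.mem_sdiff.mpr ⟨Finset.mem_univ _, hx⟩⟩ : X → O))
    (fun g _ => Finset.mem_univ _) ?_ ?_ ?_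
  · intro h _
    simp only [Finset.mem_coe, Finset.mem_filter, Finset.mem_univ, true_and]
    funext x
    show (if hx : x.1 ∈ V then t ⟨x.1, hx⟩ else _) = t x
    rw [dif_pos x.2]
  · intro g hg
    simp only [Finset.mem_coe, Finset.mem_filter, Finset.mem_univ, true_and] at hg
    funext x
    by_cases hx : x ∈ V
    · show (if hx : x ∈ V then t ⟨x, hx⟩ else _) = g x
      rw [dif_pos hx]
      exact (congrFun hg ⟨x, hx⟩).symm
    · show (if hx : x ∈ V then t ⟨x, hx⟩ else _) = g x
      rw [dif_neg hx]
  · intro h _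
    funext x
    have hx : x.1 ∉ V := (Finset.mem_sdiff.mp x.2).2
    show (if hx' : x.1 ∈ V then t ⟨x.1, hx'⟩ else _) = h x
    rw [dif_neg hx]

/-- two-constraint counting -/
lemma card_fiber₂ (A B : Finset X) (a : Evt (O := O) A) (b : Evt (O := O) B) :
    (Finset.univ.filter (fun g : X → O =>
        globRestrict g A = a ∧ globRestrict g B = b)).card
      = if restrictE (Finset.inter_subset_left (s₂ := B)) a
            = restrictE Finset.inter_subset_right b
        then (Fintype.card O) ^ ((Finset.univ \ (A ∪ B)).card) else 0 := by
  classical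
  by_cases hcomp : restrictE (Finset.inter_subset_left (s₂ := B)) a
      = restrictE Finset.inter_subset_right b
  · rw [if_pos hcomp, ← card_fiber (A ∪ B) (glueE a b)]
    congr 1
    apply Finset.filter_congr
    intro g _
    constructor
    · rintro ⟨ha, hb⟩
      funext x
      show g x.1 = glueE a b x
      simp only [glueE]
      by_cases h : x.1 ∈ A
      · rw [dif_pos h]
        exact (congrFun ha ⟨x.1, h⟩)
      · rw [dif_neg h]
        exact (congrFun hb ⟨x.1, _⟩)
    · intro hg
      constructor
      · rw [show a = restrictE Finset.subset_union_left (glueE a b) from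
          (glueE_restrict_left a b).symm, ← hg]
        rfl
      · rw [show b = restrictE Finset.subset_union_right (glueE a b) from
          (glueE_restrict_right a b hcomp).symm, ← hg]
        rfl
  · rw [if_neg hcomp]
    rw [Finset.card_eq_zero, Finset.filter_eq_empty_iff]
    rintro g - ⟨ha, hb⟩
    apply hcomp
    funext x
    have h1 : restrictE (Finset.inter_subset_left (s₂ := B)) a x = g x.1 := by
      rw [← ha]; rfl
    have h2 : restrictE Finset.inter_subset_right b x = g x.1 := by
      rw [← hb]; rfl
    rw [h1, h2]

end Aux

section Core
variable {X O : Type} [Fintype X] [DecidableEq X] [Fintype O] [DecidableEq O]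
variable {n : ℕ} (U : Fin n → Finset X) (d : ∀ i : Fin n, Evt (O := O) (U i) → ℝ)

/-- Marginal of the distribution `d i` on a subset `V ⊆ U i`. -/
def core (i : Fin n) (V : Finset X) (h : V ⊆ U i) (t : Evt (O := O) V) : ℝ :=
  ∑ u ∈ Finset.univ.filter (fun u : Evt (O := O) (U i) => restrictE h u = t), d i u

lemma core_trans (i : Fin n) {V W : Finset X} (h1 : V ⊆ U i) (h2 : W ⊆ V)
    (t : Evt (O := O) W) :
    core U d i W (h2.trans h1) t
      = ∑ v ∈ Finset.univ.filter (fun v : Evt (O := O) V => restrictE h2 v = t),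
          core U d i V h1 v :=
  sum_filter_comp (restrictE h1) (restrictE h2) (d i) t

lemma core_congr (i : Fin n) {V₁ V₂ : Finset X} (e : V₁ = V₂) (h₁ : V₁ ⊆ U i)
    (h₂ : V₂ ⊆ U i) (t : Evt (O := O) V₁) :
    core U d i V₁ h₁ t = core U d i V₂ h₂ (castE e t) := by
  subst e; rfl

lemma core_index_congr {i j : Fin n} (hij : i = j) (V : Finset X)
    (hi : V ⊆ U i) (t : Evt (O := O) V) :
    core U d i V hi t = core U d j V (hij ▸ hi) t := by
  subst hij; rfl

/-- Well-definedness of marginals thanks to non-disturbance. -/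
lemma core_welldef
    (hnd : ∀ i j : Fin n, ∀ t : Evt (O := O) (U i ∩ U j),
      ∑ s ∈ Finset.univ.filter
          (fun s : Evt (O := O) (U i) => restrictE Finset.inter_subset_left s = t),
        d i s =
      ∑ s ∈ Finset.univ.filter
          (fun s : Evt (O := O) (U j) => restrictE Finset.inter_subset_right s = t),
        d j s)
    (i j : Fin n) {V : Finset X} (hi : V ⊆ U i) (hj : V ⊆ U j)
    (t : Evt (O := O) V) :
    core U d i V hi t = core U d j V hj t := by
  have hIJ : V ⊆ U i ∩ U j := Finset.subset_inter hi hj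
  have h1 : core U d i V hi t
      = ∑ v ∈ Finset.univ.filter
          (fun v : Evt (O := O) (U i ∩ U j) => restrictE hIJ v = t),
          core U d i (U i ∩ U j) Finset.inter_subset_left v :=
    core_trans U d i Finset.inter_subset_left hIJ t
  have h2 : core U d j V hj t
      = ∑ v ∈ Finset.univ.filter
          (fun v : Evt (O := O) (U i ∩ U j) => restrictE hIJ v = t),
          core U d j (U i ∩ U j) Finset.inter_subset_right v :=
    core_trans U d j Finset.inter_subset_right hIJ t
  rw [h1, h2]
  exact Finset.sum_congr rfl fun v _ => hnd i j v

/-- Marginalization of the uniformly-extended marginal. -/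
lemma core_marg (hO : (Fintype.card O : ℝ) ≠ 0)
    (i j : Fin n) (V : Finset X) (hV : V ⊆ U i) (s : Evt (O := O) (U j)) :
    ∑ g ∈ Finset.univ.filter (fun g : X → O => globRestrict g (U j) = s),
        core U d i V hV (globRestrict g V)
          * ((Fintype.card O : ℝ))⁻¹ ^ ((Finset.univ \ V).card)
      = core U d i (U j ∩ V) (Finset.inter_subset_right.trans hV)
          (restrictE Finset.inter_subset_left s)
          * ((Fintype.card O : ℝ))⁻¹ ^ ((U j \ V).card) := by
  set r : ℝ := ((Fintype.card O : ℝ))⁻¹ with hr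
  -- expand core and swap sums
  have step1 :
      ∑ g ∈ Finset.univ.filter (fun g : X → O => globRestrict g (U j) = s),
        core U d i V hV (globRestrict g V) * r ^ ((Finset.univ \ V).card)
      = ∑ u : Evt (O := O) (U i),
          ∑ g : X → O,
            (if globRestrict g (U j) = s ∧ globRestrict g V = restrictE hV u
              then d i u * r ^ ((Finset.univ \ V).card) else 0) := by
    rw [Finset.sum_comm]
    rw [Finset.sum_filter]
    refine Finset.sum_congr rfl fun g _ => ?_
    by_cases hg : globRestrict g (U j) = s
    · rw [if_pos hg]
      unfold core
      rw [Finset.sum_mul, Finset.sum_filter]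
      refine Finset.sum_congr rfl fun u _ => ?_
      by_cases hu : restrictE hV u = globRestrict g V
      · rw [if_pos hu, if_pos ⟨hg, hu.symm⟩]
      · rw [if_neg hu, if_neg (by rintro ⟨-, h⟩; exact hu h.symm)]
    · rw [if_neg hg]
      refine (Finset.sum_eq_zero fun u _ => ?_).symm
      rw [if_neg (by rintro ⟨h, -⟩; exact hg h)]
  rw [step1]
  -- count the fibers
  have step2 : ∀ u : Evt (O := O) (U i),
      ∑ g : X → O,
        (if globRestrict g (U j) = s ∧ globRestrict g V = restrictE hV u
          then d i u * r ^ ((Finset.univ \ V).card) else 0)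
      = (if restrictE (Finset.inter_subset_left (s₂ := V)) s
            = restrictE Finset.inter_subset_right (restrictE hV u)
          then d i u * r ^ ((Finset.univ \ V).card)
              * (Fintype.card O : ℝ) ^ ((Finset.univ \ (U j ∪ V)).card) else 0) := by
    intro u
    rw [← Finset.sum_filter]
    rw [Finset.sum_const]
    rw [card_fiber₂ (U j) V s (restrictE hV u)]
    by_cases hc : restrictE (Finset.inter_subset_left (s₂ := V)) s
        = restrictE Finset.inter_subset_right (restrictE hV u)
    · rw [if_pos hc, if_pos hc, nsmul_eq_mul]
      push_cast
      ring
    · rw [if_neg hc, if_neg hc, zero_smul]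
  rw [Finset.sum_congr rfl fun u _ => step2 u]
  -- simplify the powers
  have hsplit : (Finset.univ \ V).card
      = (Finset.univ \ (U j ∪ V)).card + (U j \ V).card := by
    rw [← Finset.card_union_of_disjoint]
    · congr 1
      ext x
      simp only [Finset.mem_union, Finset.mem_sdiff, Finset.mem_univ, true_and]
      tauto
    · rw [Finset.disjoint_left]
      intro x hx hx'
      have := (Finset.mem_sdiff.mp hx).2
      exact this (Finset.mem_union.mpr (Or.inl (Finset.mem_sdiff.mp hx').1))
  have hpow : r ^ ((Finset.univ \ V).card)
      * (Fintype.card O : ℝ) ^ ((Finset.univ \ (U j ∪ V)).card)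
      = r ^ ((U j \ V).card) := by
    rw [hsplit, pow_add]
    rw [mul_comm (r ^ (Finset.univ \ (U j ∪ V)).card), mul_assoc,
      ← mul_pow]
    rw [mul_comm ((Fintype.card O : ℝ))⁻¹, mul_inv_cancel₀ hO, one_pow, mul_one]
  -- conclude
  unfold core
  rw [Finset.sum_mul, Finset.sum_filter]
  refine Finset.sum_congr rfl fun u _ => ?_
  have hcond : (restrictE (Finset.inter_subset_left (s₂ := V)) s
        = restrictE Finset.inter_subset_right (restrictE hV u))
      ↔ (restrictE (Finset.inter_subset_right.trans hV) u
        = restrictE Finset.inter_subset_left s) := by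
    rw [restrictE_restrictE]
    exact eq_comm
  by_cases hc : restrictE (Finset.inter_subset_right.trans hV) u
      = restrictE Finset.inter_subset_left s
  · rw [if_pos (hcond.mpr hc), if_pos hc, mul_assoc, hpow]
  · rw [if_neg (fun h => hc (hcond.mp h)), if_neg hc]

end Core

section Piece
variable {X O : Type} [Fintype X] [DecidableEq X] [Fintype O] [DecidableEq O]
variable {n : ℕ} (U : Fin n → Finset X) (d : ∀ i : Fin n, Evt (O := O) (U i) → ℝ)

/-- The inclusion–exclusion piece attached to a nonempty set `S` of contexts:
the common marginal on `⋂ i ∈ S, U i` extended uniformly to all of `X`. -/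
noncomputable def piece (S : Finset (Fin n)) : (X → O) → ℝ :=
  if h : S.Nonempty then
    fun g => core U d (S.min' h) (S.inf U) (Finset.inf_le (S.min'_mem h))
        (globRestrict g (S.inf U))
      * ((Fintype.card O : ℝ))⁻¹ ^ ((Finset.univ \ S.inf U).card)
  else 0

/-- The value which the marginal of a piece takes. -/
noncomputable def pval (j : Fin n) (s : Evt (O := O) (U j)) (T : Finset (Fin n)) : ℝ :=
  if h : j ∈ T then
    core U d (T.min' ⟨j, h⟩) (T.inf U) (Finset.inf_le (T.min'_mem ⟨j, h⟩))
        (restrictE (Finset.inf_le h) s)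
      * ((Fintype.card O : ℝ))⁻¹ ^ ((U j \ T.inf U).card)
  else 0

lemma pval_singleton (j : Fin n) (s : Evt (O := O) (U j)) :
    pval U d j s {j} = d j s := by
  unfold pval
  rw [dif_pos (Finset.mem_singleton_self j)]
  have e : ({j} : Finset (Fin n)).inf U = U j := Finset.inf_singleton
  have hmin : ({j} : Finset (Fin n)).min' ⟨j, Finset.mem_singleton_self j⟩ = j := by
    apply Finset.min'_singleton
  have hUj : U (({j} : Finset (Fin n)).min' ⟨j, Finset.mem_singleton_self j⟩) = U j := by
    rw [hmin]
  have hsub2 : U j ⊆ U (({j} : Finset (Fin n)).min' ⟨j, Finset.mem_singleton_self j⟩) :=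
    hUj.symm ▸ Finset.Subset.refl (U j)
  rw [core_congr U d _ e _ hsub2]
  have hcast : castE e (restrictE (Finset.inf_le (Finset.mem_singleton_self j)) s)
      = restrictE (Finset.Subset.refl (U j)) s := rfl
  rw [hcast]
  have hdsj : U j \ ({j} : Finset (Fin n)).inf U = ∅ := by
    rw [e, Finset.sdiff_self]
  rw [hdsj, Finset.card_empty, pow_zero, mul_one]
  -- now compute core at the full set for the index min' {j} = j
  rw [core_index_congr U d hmin (U j) hsub2]
  unfold core
  have : ∀ u : Evt (O := O) (U j),
      restrictE (Finset.Subset.refl (U j)) u = u := fun u => rfl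
  have hfilter : Finset.univ.filter
      (fun u : Evt (O := O) (U j) =>
        restrictE (Finset.Subset.refl (U j)) u = restrictE (Finset.Subset.refl (U j)) s)
      = {s} := by
    ext u
    simp only [Finset.mem_filter, Finset.mem_univ, true_and, Finset.mem_singleton]
    rw [this u, this s]
  rw [hfilter, Finset.sum_singleton]

/-- Marginalizing a piece over a context `U j` gives `pval` at `insert j S`. -/
lemma piece_marg
    (hnd : ∀ i j : Fin n, ∀ t : Evt (O := O) (U i ∩ U j),
      ∑ s ∈ Finset.univ.filter
          (fun s : Evt (O := O) (U i) => restrictE Finset.inter_subset_left s = t),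
        d i s =
      ∑ s ∈ Finset.univ.filter
          (fun s : Evt (O := O) (U j) => restrictE Finset.inter_subset_right s = t),
        d j s)
    (hO : (Fintype.card O : ℝ) ≠ 0)
    (S : Finset (Fin n)) (hS : S.Nonempty) (j : Fin n) (s : Evt (O := O) (U j)) :
    ∑ g ∈ Finset.univ.filter (fun g : X → O => globRestrict g (U j) = s),
        piece U d S g = pval U d j s (insert j S) := by
  set T : Finset (Fin n) := insert j S with hT
  have hjT : j ∈ T := Finset.mem_insert_self j S
  have hTne : T.Nonempty := ⟨j, hjT⟩
  set i : Fin n := S.min' hS with hi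
  have hiS : i ∈ S := S.min'_mem hS
  set V : Finset X := S.inf U with hV
  have hVi : V ⊆ U i := Finset.inf_le hiS
  have e : T.inf U = U j ∩ V := by
    rw [hT, Finset.inf_insert, hV]
    rfl
  have hTV : T.inf U ⊆ U i := by
    rw [e]
    exact Finset.inter_subset_right.trans hVi
  -- left side via core_marg
  unfold piece
  rw [dif_pos hS]
  rw [core_marg U d hO i j V hVi s]
  -- right side
  unfold pval
  rw [dif_pos hjT]
  set m : Fin n := T.min' ⟨j, hjT⟩ with hm
  have hmT : m ∈ T := T.min'_mem ⟨j, hjT⟩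
  have hTm : T.inf U ⊆ U m := Finset.inf_le hmT
  -- change index m to i using well-definedness
  rw [core_welldef U d hnd m i hTm hTV (restrictE (Finset.inf_le hjT) s)]
  -- cast along e
  rw [core_congr U d i e hTV (e ▸ hTV) (restrictE (Finset.inf_le hjT) s)]
  have hcast : castE e (restrictE (Finset.inf_le hjT) s)
      = restrictE (Finset.inter_subset_left (s₂ := V)) s := rfl
  rw [hcast]
  have hexp : U j \ T.inf U = U j \ V := by
    rw [e, Finset.sdiff_inter_self_left]
  rw [hexp]

/-- The telescoping identity for signed sums over nonempty subsets. -/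
lemma telescope {n : ℕ} (j : Fin n) (F : Finset (Fin n) → ℝ) :
    ∑ S ∈ Finset.univ.filter (fun S : Finset (Fin n) => S.Nonempty),
      (-1 : ℝ) ^ (S.card + 1) * F (insert j S) = F {j} := by
  classical
  rw [← Finset.sum_filter_add_sum_filter_not _ (fun S => j ∈ S)]
  have h1 : (Finset.univ.filter (fun S : Finset (Fin n) => S.Nonempty)).filter
      (fun S => j ∈ S) = Finset.univ.filter (fun S : Finset (Fin n) => j ∈ S) := by
    rw [Finset.filter_filter]
    apply Finset.filter_congr
    intro S _
    simp only [iff_iff_implies_and_implies]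
    exact ⟨fun h => h.2, fun h => ⟨⟨j, h⟩, h⟩⟩
  have hsum1 : ∑ S ∈ (Finset.univ.filter (fun S : Finset (Fin n) => S.Nonempty)).filter
        (fun S => j ∈ S), (-1 : ℝ) ^ (S.card + 1) * F (insert j S)
      = ∑ T ∈ Finset.univ.filter (fun T : Finset (Fin n) => j ∈ T),
          (-1 : ℝ) ^ (T.card + 1) * F T := by
    rw [h1]
    refine Finset.sum_congr rfl fun S hS => ?_
    have hj : j ∈ S := (Finset.mem_filter.mp hS).2
    rw [Finset.insert_eq_self.mpr hj]
  have hsum2 : ∑ S ∈ (Finset.univ.filter (fun S : Finset (Fin n) => S.Nonempty)).filter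
        (fun S => ¬ j ∈ S), (-1 : ℝ) ^ (S.card + 1) * F (insert j S)
      = ∑ T ∈ (Finset.univ.filter (fun T : Finset (Fin n) => j ∈ T)).erase {j},
          (-1 : ℝ) ^ T.card * F T := by
    apply Finset.sum_nbij' (fun S => insert j S) (fun T => T.erase j)
    · intro S hS
      simp only [Finset.mem_filter, Finset.mem_univ, true_and] at hS
      obtain ⟨hne, hj⟩ := hS
      simp only [Finset.mem_erase, Finset.mem_filter, Finset.mem_univ, true_and]
      refine ⟨?_, Finset.mem_insert_self j S⟩
      intro hcontra
      have : S = ∅ := by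
        have := Finset.erase_insert hj
        rw [hcontra] at this
        simpa using this.symm
      exact hne.ne_empty this
    · intro T hT
      simp only [Finset.mem_erase, Finset.mem_filter, Finset.mem_univ, true_and] at hT
      obtain ⟨hne, hj⟩ := hT
      simp only [Finset.mem_filter, Finset.mem_univ, true_and]
      constructor
      · rw [Finset.nonempty_iff_ne_empty]
        intro hcontra
        apply hne
        have := Finset.insert_erase hj
        rw [hcontra] at this
        simpa using this.symm
      · exact Finset.notMem_erase j T
    · intro S hS
      simp only [Finset.mem_filter, Finset.mem_univ, true_and] at hS
      exact Finset.erase_insert hS.2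
    · intro T hT
      simp only [Finset.mem_erase, Finset.mem_filter, Finset.mem_univ, true_and] at hT
      exact Finset.insert_erase hT.2
    · intro S hS
      simp only [Finset.mem_filter, Finset.mem_univ, true_and] at hS
      rw [Finset.card_insert_of_notMem hS.2]
  rw [hsum1, hsum2]
  have hjmem : ({j} : Finset (Fin n)) ∈ Finset.univ.filter
      (fun T : Finset (Fin n) => j ∈ T) := by
    simp
  rw [Finset.sum_erase_eq_sub hjmem]
  have : ∀ T : Finset (Fin n), (-1 : ℝ) ^ T.card * F T
      = -((-1 : ℝ) ^ (T.card + 1) * F T) := by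
    intro T
    ring
  rw [Finset.sum_congr rfl fun T _ => this T, Finset.sum_neg_distrib]
  simp [Finset.card_singleton]

end Piece

/-- **Every non-disturbing model has a signed global realization.**  A non-disturbing
empirical model with nonnegative real values admits a (possibly signed) global
distribution `q : (X → O) → ℝ` of total mass `1` marginalizing to the model on every
context. -/
theorem nondisturbing_admits_signed_global_realization
    {X O : Type} [Fintype X] [DecidableEq X] [Fintype O] [DecidableEq O]
    {n : ℕ} (U : Fin n → Finset X)
    (hinj : Function.Injective U) (hne : ∀ i, (U i).Nonempty)
    (hcov : ∀ x : X, ∃ i, x ∈ U i)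
    (d : ∀ i : Fin n, Evt (O := O) (U i) → ℝ)
    (hpos : ∀ (i : Fin n) (s : Evt (O := O) (U i)), 0 ≤ d i s)
    (hnorm : ∀ i, ∑ s : Evt (O := O) (U i), d i s = 1)
    (hnd : ∀ i j : Fin n, ∀ t : Evt (O := O) (U i ∩ U j),
      ∑ s ∈ Finset.univ.filter
          (fun s : Evt (O := O) (U i) => restrictE Finset.inter_subset_left s = t),
        d i s =
      ∑ s ∈ Finset.univ.filter
          (fun s : Evt (O := O) (U j) => restrictE Finset.inter_subset_right s = t),
        d j s) :
    ∃ q : (X → O) → ℝ,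
      ∑ g : X → O, q g = 1 ∧
      ∀ (i : Fin n) (s : Evt (O := O) (U i)),
        d i s = ∑ g ∈ Finset.univ.filter
            (fun g : X → O => globRestrict g (U i) = s),
          q g := by
  classical
  by_cases hn : n = 0
  · subst hn
    refine ⟨fun _ => 1, ?_, fun i => i.elim0⟩
    have hX : IsEmpty X := ⟨fun x => by rcases hcov x with ⟨i, _⟩; exact i.elim0⟩
    rw [Finset.sum_const, Finset.card_univ]
    have : Fintype.card (X → O) = 1 := by
      rw [Fintype.card_fun]
      simp
    rw [this, one_smul]
  · have npos : 0 < n := Nat.pos_of_ne_zero hn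
    set i0 : Fin n := ⟨0, npos⟩ with hi0
    have hO : (Fintype.card O : ℝ) ≠ 0 := by
      intro h
      have hcO : Fintype.card O = 0 := by exact_mod_cast h
      have hE : Fintype.card (Evt (O := O) (U i0)) = 0 := by
        rw [card_Evt, hcO]
        refine zero_pow ?_
        have := Finset.card_pos.mpr (hne i0)
        omega
      have huniv : (Finset.univ : Finset (Evt (O := O) (U i0))) = ∅ := by
        rw [← Finset.card_eq_zero, Finset.card_univ]
        exact hE
      have h1 := hnorm i0
      rw [huniv, Finset.sum_empty] at h1
      norm_num at h1
    set q : (X → O) → ℝ := fun g =>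
      ∑ S ∈ Finset.univ.filter (fun S : Finset (Fin n) => S.Nonempty),
        (-1 : ℝ) ^ (S.card + 1) * piece U d S g with hq
    have hmarg : ∀ (j : Fin n) (s : Evt (O := O) (U j)),
        ∑ g ∈ Finset.univ.filter (fun g : X → O => globRestrict g (U j) = s), q g
          = d j s := by
      intro j s
      rw [hq]
      rw [Finset.sum_comm]
      have : ∀ S ∈ Finset.univ.filter (fun S : Finset (Fin n) => S.Nonempty),
          ∑ g ∈ Finset.univ.filter (fun g : X → O => globRestrict g (U j) = s),
            (-1 : ℝ) ^ (S.card + 1) * piece U d S g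
          = (-1 : ℝ) ^ (S.card + 1) * pval U d j s (insert j S) := by
        intro S hS
        have hSne : S.Nonempty := (Finset.mem_filter.mp hS).2
        rw [← Finset.mul_sum, piece_marg U d hnd hO S hSne j s]
      rw [Finset.sum_congr rfl this, telescope j (pval U d j s), pval_singleton]
    refine ⟨q, ?_, ?_⟩
    · have hfib := Finset.sum_fiberwise (Finset.univ : Finset (X → O))
        (fun g => globRestrict g (U i0)) q
      rw [← hfib]
      rw [Finset.sum_congr rfl fun s _ => hmarg i0 s]
      exact hnorm i0
    · intro i s
      exact (hmarg i s).symm
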